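/- In any oriented circle diagram, the degree of an anticlockwise circle (i.e. the total number of clockwise cups and caps lying on that circle) is one less than the total number of caps that the circle contains, and the degree of a clockwise circle is one more than the total number of caps that it contains. -/

import Mathlib

/-!
Common combinatorial framework for Brundan–Stroppel, "Highest weight categories arising
from Khovanov's diagram algebra I: cellularity": weights, blocks, the Bruhat order,
cup/cap diagrams, oriented cup/cap/circle diagrams, degrees, and the abstract properties
of the diagrammatically defined multiplications.
-/

namespace BrundanStroppel

open scoped Classical

inductive Label : Type
  | nought : Label
  | cross : Label
  | down : Label
  | up : Label
  deriving DecidableEq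

def Label.flip : Label → Label
  | Label.down => Label.up
  | Label.up => Label.down
  | l => l

/-- A weight: a labelling of the vertices (a set of consecutive integers) of the number
line by `∘`, `×`, `∨` (down) or `∧` (up), such that outside a finite set of vertices it is
impossible to find two vertices labelled `∨ ∧` in that order from left to right. -/
structure Weight where
  label : ℤ → Option Label
  consecutive : ∀ a b c : ℤ, a ≤ b → b ≤ c →
    (label a).isSome → (label c).isSome → (label b).isSome
  tail : ∃ S : Finset ℤ, ∀ i j : ℤ, i < j → i ∉ S → j ∉ S →
    ¬(label i = some Label.down ∧ label j = some Label.up)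

def Weight.support (w : Weight) : Set ℤ := {i : ℤ | (w.label i).isSome}

/-- `Sim v w` (`v ∼ w`): `w` is obtained from `v` by permuting the `∨`'s and the `∧`'s
(and doing nothing to the `∘`'s and `×`'s). -/
def Sim (v w : Weight) : Prop :=
  (∀ i : ℤ, (v.label i).isSome ↔ (w.label i).isSome) ∧
  (∀ i : ℤ, v.label i = some Label.nought ↔ w.label i = some Label.nought) ∧
  (∀ i : ℤ, v.label i = some Label.cross ↔ w.label i = some Label.cross) ∧
  Nonempty ({i : ℤ | v.label i = some Label.down} ≃ {i : ℤ | w.label i = some Label.down}) ∧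
  Nonempty ({i : ℤ | v.label i = some Label.up} ≃ {i : ℤ | w.label i = some Label.up})

/-- A block is a `∼`-equivalence class of weights. -/
def IsBlock (Λ : Set Weight) : Prop := ∃ w : Weight, Λ = {v : Weight | Sim w v}

/-- One step up in the Bruhat order: a `∨ ∧` pair of labels (in this order from left to
right) is swapped to `∧ ∨`; getting bigger means `∨`'s move to the right. -/
def BruhatStep (v w : Weight) : Prop :=
  ∃ i j : ℤ, i < j ∧
    v.label i = some Label.down ∧ v.label j = some Label.up ∧
    w.label i = some Label.up ∧ w.label j = some Label.down ∧
    ∀ k : ℤ, k ≠ i → k ≠ j → w.label k = v.label k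

/-- The Bruhat order on weights. -/
def BruhatLE : Weight → Weight → Prop := Relation.ReflTransGen BruhatStep

def BruhatLT (v w : Weight) : Prop := BruhatLE v w ∧ v ≠ w

/-- The data of a cup diagram (or, mirrored in the number line, of a cap diagram):
finitely many cups (lower semicircles) and some rays (going down to infinity) attached to
vertices of the number line, with no crossings. -/
structure ArcDiagram where
  support : Set ℤ
  consecutive : ∀ a b c : ℤ, a ≤ b → b ≤ c → a ∈ support → c ∈ support → b ∈ support
  cups : Set (ℤ × ℤ)
  rays : Set ℤ
  cups_finite : cups.Finite
  cups_lt : ∀ p ∈ cups, p.1 < p.2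
  cups_subset : ∀ p ∈ cups, p.1 ∈ support ∧ p.2 ∈ support
  rays_subset : rays ⊆ support
  cups_disjoint : ∀ p ∈ cups, ∀ q ∈ cups, p ≠ q →
    p.1 ≠ q.1 ∧ p.1 ≠ q.2 ∧ p.2 ≠ q.1 ∧ p.2 ≠ q.2
  rays_cups_disjoint : ∀ p ∈ cups, ∀ r ∈ rays, r ≠ p.1 ∧ r ≠ p.2
  cups_noncrossing : ∀ p ∈ cups, ∀ q ∈ cups, p.1 < q.1 → q.1 < p.2 → q.2 < p.2
  rays_cups_noncrossing : ∀ p ∈ cups, ∀ r ∈ rays, ¬(p.1 < r ∧ r < p.2)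

/-- The mirror image `c*` of a diagram in the number line, turning a cup diagram into a
cap diagram and vice versa; on the underlying combinatorial data it is the identity. -/
def ArcDiagram.star (c : ArcDiagram) : ArcDiagram := c

/-- A free vertex of a diagram: not the endpoint of any cup or ray. -/
def ArcDiagram.Free (c : ArcDiagram) (i : ℤ) : Prop :=
  i ∈ c.support ∧ i ∉ c.rays ∧ ∀ p ∈ c.cups, i ≠ p.1 ∧ i ≠ p.2

/-- `c w` is an oriented cup diagram. -/
def OrientedCup (c : ArcDiagram) (w : Weight) : Prop :=
  c.support = w.support ∧
  (∀ i : ℤ, c.Free i → w.label i = some Label.nought ∨ w.label i = some Label.cross) ∧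
  (∀ p ∈ c.cups,
    (w.label p.1 = some Label.down ∧ w.label p.2 = some Label.up) ∨
    (w.label p.1 = some Label.up ∧ w.label p.2 = some Label.down)) ∧
  (∀ r ∈ c.rays, w.label r = some Label.down ∨ w.label r = some Label.up) ∧
  (∀ r ∈ c.rays, ∀ t ∈ c.rays, r < t →
    ¬(w.label r = some Label.down ∧ w.label t = some Label.up))

/-- `w b` is an oriented cap diagram iff `b* w` is an oriented cup diagram. -/
def OrientedCap (w : Weight) (b : ArcDiagram) : Prop := OrientedCup b.star w

/-- The degree of the oriented cup diagram `c w`: its number of clockwise cups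
(a cup is clockwise if its leftmost vertex is labelled `∧`). -/
noncomputable def cupDeg (c : ArcDiagram) (w : Weight) : ℕ :=
  {p ∈ c.cups | w.label p.1 = some Label.up}.ncard

/-- The degree of the oriented cap diagram `w b`: its number of clockwise caps. -/
noncomputable def capDeg (w : Weight) (b : ArcDiagram) : ℕ := cupDeg b.star w

/-- `IsUnderline w c` says that `c = w̲`, i.e. `c w` is an oriented cup diagram of
degree `0`, all of whose cups are anticlockwise. -/
def IsUnderline (w : Weight) (c : ArcDiagram) : Prop :=
  OrientedCup c w ∧ ∀ p ∈ c.cups, w.label p.1 = some Label.down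

/-- `IsOverline w b` says that `b = w̄ = (w̲)*`. -/
def IsOverline (w : Weight) (b : ArcDiagram) : Prop := IsUnderline w b.star

/-- `SubW v w` is the relation `v ⊂ w`: `v ∼ w` and `v̲ w` is an oriented cup diagram.
(Equivalently `w ⊃ v`: `w ∼ v` and `w v̄` is an oriented cap diagram.) -/
def SubW (v w : Weight) : Prop :=
  Sim v w ∧ ∃ c : ArcDiagram, IsUnderline v c ∧ OrientedCup c w

def arcAdj (a b : ArcDiagram) (i j : ℤ) : Prop :=
  (i, j) ∈ a.cups ∨ (j, i) ∈ a.cups ∨ (i, j) ∈ b.cups ∨ (j, i) ∈ b.cups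

def reaches (a b : ArcDiagram) : ℤ → ℤ → Prop := Relation.ReflTransGen (arcAdj a b)

/-- `C` is a circle of the circle diagram `a b` (cup diagram `a` glued under cap diagram
`b`): a connected component of the diagram in which every vertex lies both on a cup of `a`
and on a cap of `b`. -/
def IsCircle (a b : ArcDiagram) (C : Set ℤ) : Prop :=
  (∃ v ∈ C, ∀ j : ℤ, j ∈ C ↔ reaches a b v j) ∧
  ∀ i ∈ C, (∃ j : ℤ, (i, j) ∈ a.cups ∨ (j, i) ∈ a.cups) ∧
           (∃ j : ℤ, (i, j) ∈ b.cups ∨ (j, i) ∈ b.cups)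

/-- The vertex `i` lies on a circle (rather than on a line) of the circle diagram `a b`:
its connected component contains no ray. -/
def OnCircle (a b : ArcDiagram) (i : ℤ) : Prop :=
  ∀ j : ℤ, reaches a b i j → j ∉ a.rays ∧ j ∉ b.rays

/-- A Khovanov block of rank `n`: a block consisting of bounded weights having exactly
`n` labels `∨` and `n` labels `∧`. -/
def IsKhovanovBlock (Λ : Set Weight) (n : ℕ) : Prop :=
  IsBlock Λ ∧ ∀ w ∈ Λ, w.support.Finite ∧
    {i : ℤ | w.label i = some Label.down}.ncard = n ∧
    {i : ℤ | w.label i = some Label.up}.ncard = n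

/-- An oriented circle diagram `a λ b` with weight `λ ∈ Λ`. -/
structure OCD (Λ : Set Weight) where
  a : ArcDiagram
  wt : Weight
  b : ArcDiagram
  wt_mem : wt ∈ Λ
  oriented_a : OrientedCup a wt
  oriented_b : OrientedCap wt b

/-- A closed oriented circle diagram: one with no rays (hence no lines). -/
def OCD.Closed {Λ : Set Weight} (x : OCD Λ) : Prop := x.a.rays = ∅ ∧ x.b.rays = ∅

/-- The degree of an oriented circle diagram: its number of clockwise cups and caps. -/
noncomputable def OCD.deg {Λ : Set Weight} (x : OCD Λ) : ℕ :=
  cupDeg x.a x.wt + capDeg x.wt x.b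

/-- The anti-automorphism `(a λ b) ↦ (b* λ a*)` on the level of basis vectors. -/
def OCD.flip {Λ : Set Weight} (x : OCD Λ) : OCD Λ where
  a := x.b
  wt := x.wt
  b := x.a
  wt_mem := x.wt_mem
  oriented_a := x.oriented_b
  oriented_b := x.oriented_a

/-- The bilinear extension to the whole diagram algebra of a multiplication given by
structure constants on basis vectors. -/
noncomputable def extendMul {B : Type} {F : Type} [Field F]
    (m : B → B → (B →₀ F)) (s t : B →₀ F) : B →₀ F :=
  s.sum fun x c => t.sum fun y d => (c * d) • m x y

/-- The properties of the diagrammatically defined multiplication which come directly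
from its construction: the product `(a λ b)(c μ d)` of two basis vectors is zero unless
`b* = c`, the multiplication is associative, and it is compatible with the grading. -/
def IsDiagramMul {F : Type} [Field F] (Λ : Set Weight)
    (m : OCD Λ → OCD Λ → (OCD Λ →₀ F)) : Prop :=
  (∀ x y : OCD Λ, x.b.star ≠ y.a → m x y = 0) ∧
  (∀ x y z : OCD Λ,
    extendMul m (m x y) (Finsupp.single z 1) = extendMul m (Finsupp.single x 1) (m y z)) ∧
  (∀ x y z : OCD Λ, (m x y) z ≠ 0 → z.deg = x.deg + y.deg)

/-- Triangularity of the product `(a λ b)(c μ d)` of two basis vectors, with scalars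
`s a λ b μ ∈ {0,1}` depending only on `a λ b` and `μ` but not on `d`:
`(a λ b)(c μ d) = 0` if `b ≠ c*`; it equals `s(aλb)(μ)·(a μ d) + (†)` if `b = c*` and
`a μ` is oriented; and it equals `(†)` otherwise, where `(†)` is a linear combination of
basis vectors `(a ν d)` with `ν > μ`; moreover `s(aλb)(μ) = 1` if `b = λ̄ = c*` and
`a μ` is oriented. -/
def TriangularAt {F : Type} [Field F] {Λ : Set Weight}
    (m : OCD Λ → OCD Λ → (OCD Λ →₀ F))
    (s : ArcDiagram → Weight → ArcDiagram → Weight → F)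
    (x y : OCD Λ) : Prop :=
  (x.b.star ≠ y.a → m x y = 0) ∧
  (x.b.star = y.a → OrientedCup x.a y.wt →
    (∀ z : OCD Λ, (m x y) z ≠ 0 →
      z.a = x.a ∧ z.b = y.b ∧ (z.wt = y.wt ∨ BruhatLT y.wt z.wt)) ∧
    (∀ z : OCD Λ, z.a = x.a → z.b = y.b → z.wt = y.wt →
      (m x y) z = s x.a x.wt x.b y.wt)) ∧
  (x.b.star = y.a → ¬ OrientedCup x.a y.wt →
    ∀ z : OCD Λ, (m x y) z ≠ 0 → z.a = x.a ∧ z.b = y.b ∧ BruhatLT y.wt z.wt) ∧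
  (x.b.star = y.a → IsOverline x.wt x.b → OrientedCup x.a y.wt →
    s x.a x.wt x.b y.wt = 1)

/-- `w` is the closure `cl(v)` of the bounded weight `v`: `p` new vertices labelled `∨`
are added at the left end of the number line and `q` new vertices labelled `∧` at the
right end. -/
def IsClosureOf (p q : ℕ) (v w : Weight) : Prop :=
  v.support.Finite ∧
  (∀ i ∈ v.support, w.label i = v.label i) ∧
  ∃ L R : Set ℤ,
    w.support = L ∪ v.support ∪ R ∧
    L.Finite ∧ R.Finite ∧ L.ncard = p ∧ R.ncard = q ∧
    (∀ a ∈ L, (∀ i ∈ v.support, a < i) ∧ ∀ r ∈ R, a < r) ∧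
    (∀ r ∈ R, ∀ i ∈ v.support, i < r) ∧
    (∀ a ∈ L, w.label a = some Label.down) ∧
    (∀ r ∈ R, w.label r = some Label.up)

/-- `v ≺ w` for weights: `v` is bounded, its vertices form a subset of the vertices of
`w`, the labels agree on the vertices of `v`, and amongst the remaining vertices of `w`
no two are labelled `∨ ∧` in that order from left to right. -/
def WPrec (v w : Weight) : Prop :=
  v.support.Finite ∧ v.support ⊆ w.support ∧
  (∀ i ∈ v.support, w.label i = v.label i) ∧
  ∀ i j : ℤ, i < j → i ∈ w.support → j ∈ w.support → i ∉ v.support → j ∉ v.support →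
    ¬(w.label i = some Label.down ∧ w.label j = some Label.up)

/-- `Γ ≺ Λ` for blocks. -/
def BPrec (Γ Λ : Set Weight) : Prop := ∃ v ∈ Γ, ∃ w ∈ Λ, WPrec v w

namespace Key

def Adj (A B : Set (ℤ × ℤ)) (i j : ℤ) : Prop :=
  ∃ c, (c ∈ A ∨ c ∈ B) ∧ ((c.1 = i ∧ c.2 = j) ∨ (c.1 = j ∧ c.2 = i))

lemma adj_symm {A B : Set (ℤ × ℤ)} : Symmetric (Adj A B) := by
  rintro i j ⟨c, hc, h⟩
  exact ⟨c, hc, by tauto⟩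

structure Cfg where
  C : Set ℤ
  A : Set (ℤ × ℤ)
  B : Set (ℤ × ℤ)
  L : ℤ → Bool
  v : ℤ
  hCfin : C.Finite
  hvC : v ∈ C
  hvmin : ∀ j ∈ C, v ≤ j
  hAlt : ∀ c ∈ A, c.1 < c.2
  hBlt : ∀ c ∈ B, c.1 < c.2
  hAC : ∀ c ∈ A, c.1 ∈ C ∧ c.2 ∈ C
  hBC : ∀ c ∈ B, c.1 ∈ C ∧ c.2 ∈ C
  hAdisj : ∀ c ∈ A, ∀ d ∈ A, c ≠ d → c.1 ≠ d.1 ∧ c.1 ≠ d.2 ∧ c.2 ≠ d.1 ∧ c.2 ≠ d.2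
  hBdisj : ∀ c ∈ B, ∀ d ∈ B, c ≠ d → c.1 ≠ d.1 ∧ c.1 ≠ d.2 ∧ c.2 ≠ d.1 ∧ c.2 ≠ d.2
  hAnc : ∀ c ∈ A, ∀ d ∈ A, c.1 < d.1 → d.1 < c.2 → d.2 < c.2
  hBnc : ∀ c ∈ B, ∀ d ∈ B, c.1 < d.1 → d.1 < c.2 → d.2 < c.2
  hAcov : ∀ i ∈ C, ∃ c ∈ A, i = c.1 ∨ i = c.2
  hBcov : ∀ i ∈ C, ∃ c ∈ B, i = c.1 ∨ i = c.2
  hAalt : ∀ c ∈ A, L c.1 ≠ L c.2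
  hBalt : ∀ c ∈ B, L c.1 ≠ L c.2
  hconn : ∀ i ∈ C, Relation.ReflTransGen (Adj A B) v i

namespace Cfg

variable (cfg : Cfg)

lemma hAfin : cfg.A.Finite := by
  refine Set.Finite.subset (cfg.hCfin.prod cfg.hCfin) ?_
  intro c hc
  exact ⟨(cfg.hAC c hc).1, (cfg.hAC c hc).2⟩

lemma hBfin : cfg.B.Finite := by
  refine Set.Finite.subset (cfg.hCfin.prod cfg.hCfin) ?_
  intro c hc
  exact ⟨(cfg.hBC c hc).1, (cfg.hBC c hc).2⟩

lemma uniqueA {c d : ℤ × ℤ} {i : ℤ} (hc : c ∈ cfg.A) (hd : d ∈ cfg.A)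
    (hic : i = c.1 ∨ i = c.2) (hid : i = d.1 ∨ i = d.2) : c = d := by
  by_contra hne
  have := cfg.hAdisj c hc d hd hne
  rcases hic with h1 | h1 <;> rcases hid with h2 | h2 <;> subst h1 <;> tauto

lemma uniqueB {c d : ℤ × ℤ} {i : ℤ} (hc : c ∈ cfg.B) (hd : d ∈ cfg.B)
    (hic : i = c.1 ∨ i = c.2) (hid : i = d.1 ∨ i = d.2) : c = d := by
  by_contra hne
  have := cfg.hBdisj c hc d hd hne
  rcases hic with h1 | h1 <;> rcases hid with h2 | h2 <;> subst h1 <;> tauto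

/-- The conclusion: number of clockwise cups plus clockwise caps equals
number of caps minus/plus one according to the label at the minimum. -/
def Concl : Prop :=
  (cfg.L cfg.v = false →
    {c ∈ cfg.A | cfg.L c.1 = true}.ncard + {c ∈ cfg.B | cfg.L c.1 = true}.ncard + 1
      = cfg.B.ncard) ∧
  (cfg.L cfg.v = true →
    {c ∈ cfg.A | cfg.L c.1 = true}.ncard + {c ∈ cfg.B | cfg.L c.1 = true}.ncard
      = cfg.B.ncard + 1)

lemma base (h1 : cfg.A.ncard = 1) : cfg.Concl := by
  obtain ⟨e, hAe⟩ := Set.ncard_eq_one.mp h1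
  have heA : e ∈ cfg.A := by rw [hAe]; exact rfl
  have hlt : e.1 < e.2 := cfg.hAlt e heA
  have hCeq : cfg.C = {e.1, e.2} := by
    apply Set.eq_of_subset_of_subset
    · intro i hi
      obtain ⟨c, hc, hi'⟩ := cfg.hAcov i hi
      rw [hAe] at hc
      subst hc
      rcases hi' with h | h <;> simp [h]
    · intro i hi
      rcases hi with h | h
      · subst h; exact (cfg.hAC e heA).1
      · simp only [Set.mem_singleton_iff] at h; subst h; exact (cfg.hAC e heA).2
  have hBeq : cfg.B = {(e.1, e.2)} := by
    apply Set.eq_of_subset_of_subset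
    · intro c hc
      have h1c := (cfg.hBC c hc).1
      have h2c := (cfg.hBC c hc).2
      have hclt := cfg.hBlt c hc
      rw [hCeq] at h1c h2c
      simp only [Set.mem_insert_iff, Set.mem_singleton_iff] at h1c h2c
      have : c = (e.1, e.2) := by
        rcases h1c with h | h <;> rcases h2c with h' | h' <;>
          (try omega) <;> exact Prod.ext h h'
      simpa using this
    · intro c hc
      simp only [Set.mem_singleton_iff] at hc
      subst hc
      obtain ⟨d, hd, hvd⟩ := cfg.hBcov cfg.v cfg.hvC
      have hd1 := (cfg.hBC d hd).1
      have hd2 := (cfg.hBC d hd).2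
      have hdlt := cfg.hBlt d hd
      rw [hCeq] at hd1 hd2
      simp only [Set.mem_insert_iff, Set.mem_singleton_iff] at hd1 hd2
      have : d = (e.1, e.2) := by
        rcases hd1 with h | h <;> rcases hd2 with h' | h' <;>
          (try omega) <;> exact Prod.ext h h'
      rwa [this] at hd
  have hve : cfg.v = e.1 := by
    have h1 := cfg.hvmin e.1 ((cfg.hAC e heA).1)
    have h2 := cfg.hvC
    rw [hCeq] at h2
    rcases h2 with h | h
    · exact h
    · simp only [Set.mem_singleton_iff] at h; omega
  have halt := cfg.hAalt e heA
  have he12 : e = (e.1, e.2) := rfl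
  constructor
  · intro hLv
    rw [hve] at hLv
    have hA' : {c ∈ cfg.A | cfg.L c.1 = true} = ∅ := by
      rw [hAe]; ext c; simp only [Set.mem_setOf_eq, Set.mem_singleton_iff,
        Set.mem_empty_iff_false, iff_false, not_and]
      rintro rfl; simp [hLv]
    have hB' : {c ∈ cfg.B | cfg.L c.1 = true} = ∅ := by
      rw [hBeq]; ext c; simp only [Set.mem_setOf_eq, Set.mem_singleton_iff,
        Set.mem_empty_iff_false, iff_false, not_and]
      rintro rfl; simpa using hLv
    rw [hA', hB', hBeq]
    simp
  · intro hLv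
    rw [hve] at hLv
    have hA' : {c ∈ cfg.A | cfg.L c.1 = true} = {e} := by
      rw [hAe]; ext c; simp only [Set.mem_setOf_eq, Set.mem_singleton_iff]
      constructor
      · rintro ⟨rfl, _⟩; rfl
      · rintro rfl; exact ⟨rfl, hLv⟩
    have hB' : {c ∈ cfg.B | cfg.L c.1 = true} = {(e.1, e.2)} := by
      rw [hBeq]; ext c; simp only [Set.mem_setOf_eq, Set.mem_singleton_iff]
      constructor
      · rintro ⟨rfl, _⟩; rfl
      · rintro rfl; exact ⟨rfl, hLv⟩
    rw [hA', hB', hBeq]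
    simp

lemma filter_diff (L : ℤ → Bool) (s : Set (ℤ × ℤ)) (x : ℤ × ℤ) :
    {c ∈ s \ {x} | L c.1 = true} = {c ∈ s | L c.1 = true} \ {x} := by
  ext c
  simp only [Set.mem_setOf_eq, Set.mem_diff, Set.mem_singleton_iff]
  tauto

lemma count_diff (L : ℤ → Bool) (s : Set (ℤ × ℤ)) (x : ℤ × ℤ)
    (hs : s.Finite) (hx : x ∈ s) :
    {c ∈ s | L c.1 = true}.ncard
      = {c ∈ s \ {x} | L c.1 = true}.ncard + (if L x.1 then 1 else 0) := by
  rw [filter_diff]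
  by_cases hLx : L x.1 = true
  · rw [if_pos hLx]
    exact (Set.ncard_diff_singleton_add_one (Set.mem_sep_iff.mpr ⟨hx, hLx⟩)
      (hs.subset (Set.sep_subset _ _))).symm
  · rw [if_neg hLx, add_zero]
    congr 1
    ext c
    simp only [Set.mem_setOf_eq, Set.mem_diff, Set.mem_singleton_iff]
    constructor
    · rintro ⟨hc, hL⟩
      refine ⟨⟨hc, hL⟩, fun h => hLx ?_⟩
      rw [← Set.mem_singleton_iff.mp h]
      exact hL
    · tauto

lemma count_insert (L : ℤ → Bool) (s : Set (ℤ × ℤ)) (x : ℤ × ℤ)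
    (hs : s.Finite) (hx : x ∉ s) :
    {c ∈ insert x s | L c.1 = true}.ncard
      = {c ∈ s | L c.1 = true}.ncard + (if L x.1 then 1 else 0) := by
  by_cases hLx : L x.1 = true
  · rw [if_pos hLx]
    have hset : {c ∈ insert x s | L c.1 = true} = insert x {c ∈ s | L c.1 = true} := by
      ext c
      simp only [Set.mem_setOf_eq, Set.mem_insert_iff]
      constructor
      · rintro ⟨rfl | hc, hL⟩
        · exact Or.inl rfl
        · exact Or.inr ⟨hc, hL⟩
      · rintro (rfl | ⟨hc, hL⟩)
        · exact ⟨Or.inl rfl, hLx⟩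
        · exact ⟨Or.inr hc, hL⟩
    rw [hset]
    exact Set.ncard_insert_of_notMem (fun h => hx h.1) (hs.subset (Set.sep_subset _ _))
  · rw [if_neg hLx, add_zero]
    congr 1
    ext c
    simp only [Set.mem_setOf_eq, Set.mem_insert_iff]
    constructor
    · rintro ⟨rfl | hc, hL⟩
      · exact absurd hL hLx
      · exact ⟨hc, hL⟩
    · rintro ⟨hc, hL⟩; exact ⟨Or.inr hc, hL⟩

lemma diff_pair (s : Set (ℤ × ℤ)) (x y : ℤ × ℤ) : (s \ {x}) \ {y} = s \ {x, y} := by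
  ext c
  simp only [Set.mem_diff, Set.mem_singleton_iff, Set.mem_insert_iff]
  tauto

lemma bool_four : ∀ a b c d : Bool, a ≠ b → c ≠ d → b ≠ d → a ≠ c := by decide

set_option maxHeartbeats 1000000 in
lemma step (n : ℕ) (hn : cfg.A.ncard = n)
    (IH : ∀ m < n, ∀ cfg' : Cfg, cfg'.A.ncard = m → cfg'.Concl)
    (p q : ℤ) (he : (p, q) ∈ cfg.A) (hpq : p < q) (hpv : p ≠ cfg.v)
    (cp cq : ℤ × ℤ) (hcp : cp ∈ cfg.B) (hcq : cq ∈ cfg.B) (hcpcq : cp ≠ cq)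
    (op oq : ℤ)
    (hcpe : cp = (op, p) ∨ cp = (p, op))
    (hcqe : cq = (oq, q) ∨ cq = (q, oq))
    (hopC : op ∈ cfg.C) (hoqC : oq ∈ cfg.C)
    (hopp : op ≠ p) (hopq : op ≠ q) (hoqp : oq ≠ p) (hoqq : oq ≠ q)
    (nc : ℤ × ℤ)
    (hends : (nc.1 = op ∧ nc.2 = oq) ∨ (nc.1 = oq ∧ nc.2 = op))
    (hnclt : nc.1 < nc.2)
    (hncnc : ∀ c ∈ cfg.B, c ≠ cp → c ≠ cq →
      (nc.1 < c.1 → c.1 < nc.2 → c.2 < nc.2) ∧ (c.1 < nc.1 → nc.1 < c.2 → nc.2 < c.2))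
    (hcount : (if cfg.L p then 1 else 0) + (if cfg.L cp.1 then 1 else 0) +
        (if cfg.L cq.1 then 1 else 0) = 1 + (if cfg.L nc.1 then 1 else 0)) :
    cfg.Concl := by
  set e : ℤ × ℤ := (p, q) with hedef
  set A' := cfg.A \ {e} with hA'def
  set B' := insert nc (cfg.B \ {cp, cq}) with hB'def
  set C' := cfg.C \ {p, q} with hC'def
  set f : ℤ → ℤ := fun i => if i = p then op else if i = q then oq else i with hfdef
  have he1 : e.1 = p := rfl
  have he2 : e.2 = q := rfl
  have hpC : p ∈ cfg.C := (cfg.hAC e he).1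
  have hqC : q ∈ cfg.C := (cfg.hAC e he).2
  have hvp : cfg.v < p := lt_of_le_of_ne (cfg.hvmin p hpC) (Ne.symm hpv)
  have hvq : cfg.v < q := lt_trans hvp hpq
  -- avoidance lemmas
  have hAavoid : ∀ c ∈ cfg.A, c ≠ e → c.1 ≠ p ∧ c.1 ≠ q ∧ c.2 ≠ p ∧ c.2 ≠ q := by
    intro c hc hne
    exact cfg.hAdisj c hc e he hne
  have hcp_end : p = cp.1 ∨ p = cp.2 := by
    rcases hcpe with h | h
    · exact Or.inr (by rw [h])
    · exact Or.inl (by rw [h])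
  have hcq_end : q = cq.1 ∨ q = cq.2 := by
    rcases hcqe with h | h
    · exact Or.inr (by rw [h])
    · exact Or.inl (by rw [h])
  have hop_end : op = cp.1 ∨ op = cp.2 := by
    rcases hcpe with h | h
    · exact Or.inl (by rw [h])
    · exact Or.inr (by rw [h])
  have hoq_end : oq = cq.1 ∨ oq = cq.2 := by
    rcases hcqe with h | h
    · exact Or.inl (by rw [h])
    · exact Or.inr (by rw [h])
  have hBavoid : ∀ c ∈ cfg.B, c ≠ cp → c ≠ cq →
      c.1 ≠ p ∧ c.1 ≠ q ∧ c.2 ≠ p ∧ c.2 ≠ q := by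
    intro c hc hne1 hne2
    refine ⟨?_, ?_, ?_, ?_⟩ <;> intro h
    · exact hne1 (cfg.uniqueB hc hcp (Or.inl h.symm) hcp_end)
    · exact hne2 (cfg.uniqueB hc hcq (Or.inl h.symm) hcq_end)
    · exact hne1 (cfg.uniqueB hc hcp (Or.inr h.symm) hcp_end)
    · exact hne2 (cfg.uniqueB hc hcq (Or.inr h.symm) hcq_end)
  have hBends : ∀ c ∈ cfg.B, c ≠ cp → c ≠ cq →
      op ≠ c.1 ∧ op ≠ c.2 ∧ oq ≠ c.1 ∧ oq ≠ c.2 := by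
    intro c hc hne1 hne2
    obtain ⟨a1, a2, a3, a4⟩ := cfg.hBdisj cp hcp c hc (Ne.symm hne1)
    obtain ⟨b1, b2, b3, b4⟩ := cfg.hBdisj cq hcq c hc (Ne.symm hne2)
    rcases hop_end with h | h <;> rcases hoq_end with h' | h' <;> rw [h, h'] <;>
      refine ⟨?_, ?_, ?_, ?_⟩ <;> assumption
  have hncB : nc ∉ cfg.B := by
    intro hmem
    have h1 : nc = cp := by
      rcases hends with ⟨h, _⟩ | ⟨_, h⟩
      · exact cfg.uniqueB hmem hcp (Or.inl h.symm) hop_end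
      · exact cfg.uniqueB hmem hcp (Or.inr h.symm) hop_end
    have h2 : p = nc.1 ∨ p = nc.2 := by rw [h1]; exact hcp_end
    rcases hends with ⟨ha, hb⟩ | ⟨ha, hb⟩ <;> rw [ha, hb] at h2 <;>
      rcases h2 with h2 | h2 <;> omega
  have hfp : f p = op := by
    show (if p = p then op else if p = q then oq else p) = op
    rw [if_pos rfl]
  have hfq : f q = oq := by
    show (if q = p then op else if q = q then oq else q) = oq
    rw [if_neg (show q ≠ p by omega), if_pos rfl]
  have hfid : ∀ x, x ≠ p → x ≠ q → f x = x := by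
    intro x h1 h2
    show (if x = p then op else if x = q then oq else x) = x
    rw [if_neg h1, if_neg h2]
  have hnc1C' : nc.1 ∈ C' := by
    have h3 : nc.1 ∈ cfg.C ∧ nc.1 ≠ p ∧ nc.1 ≠ q := by
      rcases hends with ⟨h, _⟩ | ⟨h, _⟩ <;> rw [h] <;>
        exact ⟨by assumption, by assumption, by assumption⟩
    refine ⟨h3.1, ?_⟩
    simp only [Set.mem_insert_iff, Set.mem_singleton_iff]
    push_neg
    exact h3.2
  have hnc2C' : nc.2 ∈ C' := by
    have h3 : nc.2 ∈ cfg.C ∧ nc.2 ≠ p ∧ nc.2 ≠ q := by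
      rcases hends with ⟨_, h⟩ | ⟨_, h⟩ <;> rw [h] <;>
        exact ⟨by assumption, by assumption, by assumption⟩
    refine ⟨h3.1, ?_⟩
    simp only [Set.mem_insert_iff, Set.mem_singleton_iff]
    push_neg
    exact h3.2
  have hAC' : ∀ c ∈ A', c.1 ∈ C' ∧ c.2 ∈ C' := by
    rintro c ⟨hc, hne⟩
    simp only [Set.mem_singleton_iff] at hne
    obtain ⟨h1, h2, h3, h4⟩ := hAavoid c hc hne
    refine ⟨⟨(cfg.hAC c hc).1, ?_⟩, ⟨(cfg.hAC c hc).2, ?_⟩⟩ <;>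
      simp only [Set.mem_insert_iff, Set.mem_singleton_iff] <;> push_neg <;>
      exact ⟨by assumption, by assumption⟩
  have hBmem' : ∀ c ∈ B', c = nc ∨ (c ∈ cfg.B ∧ c ≠ cp ∧ c ≠ cq) := by
    intro c hc
    rcases hc with h | ⟨h1, h2⟩
    · exact Or.inl h
    · simp only [Set.mem_insert_iff, Set.mem_singleton_iff] at h2
      push_neg at h2
      exact Or.inr ⟨h1, h2.1, h2.2⟩
  have hBC' : ∀ c ∈ B', c.1 ∈ C' ∧ c.2 ∈ C' := by
    intro c hc
    rcases hBmem' c hc with rfl | ⟨h1, h2, h3⟩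
    · exact ⟨hnc1C', hnc2C'⟩
    · obtain ⟨g1, g2, g3, g4⟩ := hBavoid c h1 h2 h3
      refine ⟨⟨(cfg.hBC c h1).1, ?_⟩, ⟨(cfg.hBC c h1).2, ?_⟩⟩ <;>
        simp only [Set.mem_insert_iff, Set.mem_singleton_iff] <;> push_neg <;>
        exact ⟨by assumption, by assumption⟩
  have hadjnc : Adj A' B' op oq := by
    refine ⟨nc, Or.inr (Set.mem_insert _ _), ?_⟩
    rcases hends with ⟨h1, h2⟩ | ⟨h1, h2⟩
    · exact Or.inl ⟨h1, h2⟩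
    · exact Or.inr ⟨h1, h2⟩
  have hconnstep : ∀ k j : ℤ, Adj cfg.A cfg.B k j →
      Relation.ReflTransGen (Adj A' B') (f k) (f j) := by
    rintro k j ⟨c, hcAB, hor⟩
    rcases hcAB with hcA | hcB
    · by_cases hce : c = e
      · subst hce
        rcases hor with ⟨h1, h2⟩ | ⟨h1, h2⟩
        · rw [← h1, ← h2, he1, he2, hfp, hfq]
          exact Relation.ReflTransGen.single hadjnc
        · rw [← h1, ← h2, he1, he2, hfp, hfq]
          exact Relation.ReflTransGen.single (adj_symm hadjnc)
      · obtain ⟨h1, h2, h3, h4⟩ := hAavoid c hcA hce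
        have hk : f k = k ∧ f j = j := by
          rcases hor with ⟨ha, hb⟩ | ⟨ha, hb⟩ <;> rw [← ha, ← hb] <;>
            exact ⟨hfid _ (by assumption) (by assumption),
              hfid _ (by assumption) (by assumption)⟩
        rw [hk.1, hk.2]
        exact Relation.ReflTransGen.single ⟨c, Or.inl ⟨hcA, hce⟩, hor⟩
    · by_cases hccp : c = cp
      · subst hccp
        have : f k = f j := by
          rcases hcpe with h | h <;> rw [h] at hor <;>
            rcases hor with ⟨h1, h2⟩ | ⟨h1, h2⟩ <;>
            simp only at h1 h2 <;> rw [← h1, ← h2]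
          · rw [hfid op hopp hopq, hfp]
          · rw [hfp, hfid op hopp hopq]
          · rw [hfp, hfid op hopp hopq]
          · rw [hfid op hopp hopq, hfp]
        rw [this]
      · by_cases hccq : c = cq
        · subst hccq
          have : f k = f j := by
            rcases hcqe with h | h <;> rw [h] at hor <;>
              rcases hor with ⟨h1, h2⟩ | ⟨h1, h2⟩ <;>
              simp only at h1 h2 <;> rw [← h1, ← h2]
            · rw [hfid oq hoqp hoqq, hfq]
            · rw [hfq, hfid oq hoqp hoqq]
            · rw [hfq, hfid oq hoqp hoqq]
            · rw [hfid oq hoqp hoqq, hfq]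
          rw [this]
        · obtain ⟨h1, h2, h3, h4⟩ := hBavoid c hcB hccp hccq
          have hk : f k = k ∧ f j = j := by
            rcases hor with ⟨ha, hb⟩ | ⟨ha, hb⟩ <;> rw [← ha, ← hb] <;>
              exact ⟨hfid _ (by assumption) (by assumption),
                hfid _ (by assumption) (by assumption)⟩
          rw [hk.1, hk.2]
          refine Relation.ReflTransGen.single ⟨c, Or.inr ?_, hor⟩
          refine Set.mem_insert_of_mem _ ⟨hcB, ?_⟩
          simp only [Set.mem_insert_iff, Set.mem_singleton_iff]
          push_neg
          exact ⟨hccp, hccq⟩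
  have hmap : ∀ i : ℤ, Relation.ReflTransGen (Adj cfg.A cfg.B) cfg.v i →
      Relation.ReflTransGen (Adj A' B') (f cfg.v) (f i) := by
    intro i h0
    induction h0 with
    | refl => exact Relation.ReflTransGen.refl
    | tail h2 h3 ih => exact ih.trans (hconnstep _ _ h3)
  let cfg' : Cfg :=
    { C := C', A := A', B := B', L := cfg.L, v := cfg.v
      hCfin := cfg.hCfin.subset Set.diff_subset
      hvC := ⟨cfg.hvC, by
        simp only [Set.mem_insert_iff, Set.mem_singleton_iff]; push_neg
        constructor <;> omega⟩
      hvmin := fun j hj => cfg.hvmin j hj.1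
      hAlt := fun c hc => cfg.hAlt c hc.1
      hBlt := by
        intro c hc
        rcases hBmem' c hc with rfl | ⟨h1, _, _⟩
        · exact hnclt
        · exact cfg.hBlt c h1
      hAC := hAC'
      hBC := hBC'
      hAdisj := fun c hc d hd hne => cfg.hAdisj c hc.1 d hd.1 hne
      hBdisj := by
        intro c hc d hd hne
        rcases hBmem' c hc with rfl | ⟨h1, h2, h3⟩ <;>
          rcases hBmem' d hd with rfl | ⟨g1, g2, g3⟩
        · exact absurd rfl hne
        · obtain ⟨k1, k2, k3, k4⟩ := hBends d g1 g2 g3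
          rcases hends with ⟨h, h'⟩ | ⟨h, h'⟩ <;> rw [h, h'] <;>
            refine ⟨?_, ?_, ?_, ?_⟩ <;> assumption
        · obtain ⟨k1, k2, k3, k4⟩ := hBends c h1 h2 h3
          rcases hends with ⟨h, h'⟩ | ⟨h, h'⟩ <;> rw [h, h'] <;>
            refine ⟨?_, ?_, ?_, ?_⟩ <;> (intro hcon; omega)
        · exact cfg.hBdisj c h1 d g1 hne
      hAnc := fun c hc d hd => cfg.hAnc c hc.1 d hd.1
      hBnc := by
        intro c hc d hd h1 h2
        rcases hBmem' c hc with rfl | ⟨k1, k2, k3⟩ <;>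
          rcases hBmem' d hd with rfl | ⟨g1, g2, g3⟩
        · omega
        · exact (hncnc d g1 g2 g3).1 h1 h2
        · exact (hncnc c k1 k2 k3).2 h1 h2
        · exact cfg.hBnc c k1 d g1 h1 h2
      hAcov := by
        intro i hi
        obtain ⟨c, hc, hic⟩ := cfg.hAcov i hi.1
        have hi2 : i ≠ p ∧ i ≠ q := by
          have := hi.2
          simp only [Set.mem_insert_iff, Set.mem_singleton_iff] at this
          push_neg at this
          exact this
        have hce : c ≠ e := by
          rintro rfl
          rw [he1, he2] at hic
          rcases hic with h | h
          · exact hi2.1 h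
          · exact hi2.2 h
        exact ⟨c, ⟨hc, hce⟩, hic⟩
      hBcov := by
        intro i hi
        obtain ⟨c, hc, hic⟩ := cfg.hBcov i hi.1
        have hi2 : i ≠ p ∧ i ≠ q := by
          have := hi.2
          simp only [Set.mem_insert_iff, Set.mem_singleton_iff] at this
          push_neg at this
          exact this
        by_cases hccp : c = cp
        · subst hccp
          have hiop : i = op := by
            rcases hcpe with h | h <;> rw [h] at hic <;>
              rcases hic with h' | h' <;> simp only at h' <;> omega
          refine ⟨nc, Set.mem_insert _ _, ?_⟩
          rw [hiop]
          rcases hends with ⟨h, _⟩ | ⟨_, h⟩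
          · exact Or.inl h.symm
          · exact Or.inr h.symm
        · by_cases hccq : c = cq
          · subst hccq
            have hioq : i = oq := by
              rcases hcqe with h | h <;> rw [h] at hic <;>
                rcases hic with h' | h' <;> simp only at h' <;> omega
            refine ⟨nc, Set.mem_insert _ _, ?_⟩
            rw [hioq]
            rcases hends with ⟨_, h⟩ | ⟨h, _⟩
            · exact Or.inr h.symm
            · exact Or.inl h.symm
          · refine ⟨c, Set.mem_insert_of_mem _ ⟨hc, ?_⟩, hic⟩
            simp only [Set.mem_insert_iff, Set.mem_singleton_iff]
            push_neg
            exact ⟨hccp, hccq⟩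
      hAalt := fun c hc => cfg.hAalt c hc.1
      hBalt := by
        intro c hc
        rcases hBmem' c hc with rfl | ⟨h1, _, _⟩
        · have hLop : cfg.L op ≠ cfg.L p := by
            have h0 := cfg.hBalt cp hcp
            rcases hcpe with h | h <;> rw [h] at h0
            · exact h0
            · exact h0.symm
          have hLoq : cfg.L oq ≠ cfg.L q := by
            have h0 := cfg.hBalt cq hcq
            rcases hcqe with h | h <;> rw [h] at h0
            · exact h0
            · exact h0.symm
          have hLpq : cfg.L p ≠ cfg.L q := cfg.hAalt e he
          have hkey : cfg.L op ≠ cfg.L oq :=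
            bool_four _ _ _ _ hLop hLoq hLpq
          rcases hends with ⟨h, h'⟩ | ⟨h, h'⟩ <;> rw [h, h']
          · exact hkey
          · exact hkey.symm
        · exact cfg.hBalt c h1
      hconn := by
        intro i hi
        have h0 : Relation.ReflTransGen (Adj cfg.A cfg.B) cfg.v i := cfg.hconn i hi.1
        have h1 : Relation.ReflTransGen (Adj A' B') (f cfg.v) (f i) := hmap i h0
        have hfv : f cfg.v = cfg.v := hfid _ (by omega) (by omega)
        have hfi : f i = i := by
          have := hi.2
          simp only [Set.mem_insert_iff, Set.mem_singleton_iff] at this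
          push_neg at this
          exact hfid _ this.1 this.2
        rwa [hfv, hfi] at h1 }
  -- apply the induction hypothesis
  have hA'card : A'.ncard + 1 = n := by
    rw [hA'def, ← hn]
    exact Set.ncard_diff_singleton_add_one he cfg.hAfin
  have hcfg'A : cfg'.A.ncard = n - 1 := by
    show A'.ncard = n - 1
    omega
  have hconcl' := IH (n - 1) (by omega) cfg' hcfg'A
  -- counting
  have hAfin := cfg.hAfin
  have hBfin := cfg.hBfin
  have hBd2fin : (cfg.B \ {cp, cq}).Finite := hBfin.subset Set.diff_subset
  have hSA : {c ∈ cfg.A | cfg.L c.1 = true}.ncard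
      = {c ∈ A' | cfg.L c.1 = true}.ncard + (if cfg.L p then 1 else 0) := by
    have := count_diff cfg.L cfg.A e hAfin he
    rw [he1] at this
    exact this
  have hqcp : cq ∈ cfg.B \ {cp} :=
    ⟨hcq, fun h => hcpcq (Set.mem_singleton_iff.mp h).symm⟩
  have hBcard : cfg.B.ncard = (cfg.B \ {cp, cq}).ncard + 2 := by
    have s1 : (cfg.B \ {cp}).ncard + 1 = cfg.B.ncard :=
      Set.ncard_diff_singleton_add_one hcp hBfin
    have s2 : ((cfg.B \ {cp}) \ {cq}).ncard + 1 = (cfg.B \ {cp}).ncard :=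
      Set.ncard_diff_singleton_add_one hqcp (hBfin.subset Set.diff_subset)
    rw [diff_pair] at s2
    omega
  have hncnotin : nc ∉ cfg.B \ {cp, cq} := fun h => hncB h.1
  have hB'card : B'.ncard = (cfg.B \ {cp, cq}).ncard + 1 := by
    rw [hB'def]
    exact Set.ncard_insert_of_notMem hncnotin hBd2fin
  have hSB : {c ∈ cfg.B | cfg.L c.1 = true}.ncard
      = {c ∈ cfg.B \ {cp, cq} | cfg.L c.1 = true}.ncard
        + (if cfg.L cp.1 then 1 else 0) + (if cfg.L cq.1 then 1 else 0) := by
    have s1 := count_diff cfg.L cfg.B cp hBfin hcp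
    have s2 := count_diff cfg.L (cfg.B \ {cp}) cq (hBfin.subset Set.diff_subset) hqcp
    rw [diff_pair] at s2
    omega
  have hSB' : {c ∈ B' | cfg.L c.1 = true}.ncard
      = {c ∈ cfg.B \ {cp, cq} | cfg.L c.1 = true}.ncard
        + (if cfg.L nc.1 then 1 else 0) := by
    rw [hB'def]
    exact count_insert cfg.L _ nc hBd2fin hncnotin
  -- finish
  have hc1 := hconcl'.1
  have hc2 := hconcl'.2
  have hcfg'A2 : cfg'.A = A' := rfl
  have hcfg'B2 : cfg'.B = B' := rfl
  have hcfg'L : cfg'.L = cfg.L := rfl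
  have hcfg'v : cfg'.v = cfg.v := rfl
  rw [hcfg'A2, hcfg'B2, hcfg'L, hcfg'v] at hc1 hc2
  constructor
  · intro hLv
    have := hc1 hLv
    omega
  · intro hLv
    have := hc2 hLv
    omega

lemma count_case1 (a b c : Bool) (hab : a ≠ b) :
    ((if a = true then (1 : ℕ) else 0) + (if c = true then 1 else 0))
      + (if b = true then 1 else 0) = 1 + (if c = true then 1 else 0) := by
  cases a <;> cases b <;> cases c <;> simp_all

lemma count_case2 (a b c : Bool) (hab : a ≠ b) (hcb : c ≠ b) :
    ((if a = true then (1 : ℕ) else 0) + (if a = true then 1 else 0))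
      + (if b = true then 1 else 0) = 1 + (if c = true then 1 else 0) := by
  cases a <;> cases b <;> cases c <;> simp_all

lemma count_case3 (a b c : Bool) (hab : a ≠ b) :
    ((if a = true then (1 : ℕ) else 0) + (if b = true then 1 else 0))
      + (if c = true then 1 else 0) = 1 + (if c = true then 1 else 0) := by
  cases a <;> cases b <;> cases c <;> simp_all

set_option maxHeartbeats 2000000 in
lemma concl : ∀ (n : ℕ) (cfg : Cfg), cfg.A.ncard = n → cfg.Concl := by
  intro n
  induction n using Nat.strong_induction_on with
  | _ n IH =>
    intro cfg hn
    rcases Nat.lt_or_ge n 2 with hsmall | hbig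
    · -- n = 0 or 1
      rcases Nat.lt_or_ge n 1 with h0 | h1
      · exfalso
        have hA : cfg.A = ∅ := by
          rw [← Set.ncard_eq_zero cfg.hAfin]
          omega
        obtain ⟨c, hc, _⟩ := cfg.hAcov cfg.v cfg.hvC
        rw [hA] at hc
        exact hc
      · exact cfg.base (by omega)
    -- pick a minimal-length cup whose left endpoint is not v
    obtain ⟨c0, hc0, d0, hd0, hcd⟩ := (Set.one_lt_ncard cfg.hAfin).mp (by omega)
    have hSne : ∃ c, c ∈ {c ∈ cfg.A | c.1 ≠ cfg.v} := by
      by_cases h : c0.1 = cfg.v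
      · refine ⟨d0, hd0, ?_⟩
        intro h'
        exact (cfg.hAdisj c0 hc0 d0 hd0 hcd).1 (h.trans h'.symm)
      · exact ⟨c0, hc0, h⟩
    have hSfin : {c ∈ cfg.A | c.1 ≠ cfg.v}.Finite :=
      cfg.hAfin.subset (Set.sep_subset _ _)
    obtain ⟨e, heS, hemin⟩ :=
      Set.exists_min_image {c ∈ cfg.A | c.1 ≠ cfg.v} (fun c => c.2 - c.1) hSfin hSne
    obtain ⟨p, q⟩ := e
    obtain ⟨heA, hev⟩ := heS
    simp only at heA hev hemin
    have hpq : p < q := cfg.hAlt (p, q) heA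
    have hpC : p ∈ cfg.C := (cfg.hAC (p, q) heA).1
    have hqC : q ∈ cfg.C := (cfg.hAC (p, q) heA).2
    have hvp : cfg.v < p := lt_of_le_of_ne (cfg.hvmin p hpC) (Ne.symm hev)
    -- no vertex of C strictly inside (p, q)
    have hnoin : ∀ i ∈ cfg.C, ¬(p < i ∧ i < q) := by
      rintro i hiC ⟨h1, h2⟩
      obtain ⟨c, hcA, hic⟩ := cfg.hAcov i hiC
      rcases hic with rfl | rfl
      · -- i = c.1
        have hne : c ≠ (p, q) := by
          rintro rfl
          simp only at h1
          omega
        have h3 : c.2 < q := cfg.hAnc (p, q) heA c hcA h1 h2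
        have hcS : c ∈ {c ∈ cfg.A | c.1 ≠ cfg.v} := ⟨hcA, by omega⟩
        have h4 := hemin c hcS
        have h5 := cfg.hAlt c hcA
        omega
      · -- i = c.2
        rcases lt_trichotomy c.1 p with h | h | h
        · have := cfg.hAnc c hcA (p, q) heA h (by simpa using h1)
          simp only at this
          omega
        · have hce : c = (p, q) :=
            cfg.uniqueA hcA heA (Or.inl h.symm) (Or.inl rfl)
          rw [hce] at h2
          simp only at h2
          omega
        · have hcS : c ∈ {c ∈ cfg.A | c.1 ≠ cfg.v} := ⟨hcA, by omega⟩
          have h4 := hemin c hcS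
          omega
    -- the caps at p and q
    obtain ⟨cp0, hcp0, hpcp⟩ := cfg.hBcov p hpC
    obtain ⟨cq0, hcq0, hqcq⟩ := cfg.hBcov q hqC
    have hcpcq : cp0 ≠ cq0 := by
      rintro rfl
      have hlt := cfg.hBlt cp0 hcp0
      have hcp0e : cp0 = (p, q) := by
        rcases hpcp with h | h <;> rcases hqcq with h' | h'
        · omega
        · rw [h, h']
        · omega
        · omega
      have hclose : ∀ j, Relation.ReflTransGen (Adj cfg.A cfg.B) p j →
          j = p ∨ j = q := by
        intro j hj
        induction hj with
        | refl => exact Or.inl rfl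
        | @tail k j h1 h2 ih =>
          obtain ⟨c, hc, hor⟩ := h2
          have hkc : k = c.1 ∨ k = c.2 := by
            rcases hor with ⟨ha, hb⟩ | ⟨ha, hb⟩
            · exact Or.inl ha.symm
            · exact Or.inr hb.symm
          have hkpq : k = p ∨ k = q := ih
          rcases hc with hcA | hcB
          · have hce : c = (p, q) := by
              rcases hkpq with rfl | rfl
              · exact cfg.uniqueA hcA heA hkc (Or.inl rfl)
              · exact cfg.uniqueA hcA heA hkc (Or.inr rfl)
            rw [hce] at hor
            rcases hor with ⟨ha, hb⟩ | ⟨ha, hb⟩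
            · exact Or.inr hb.symm
            · exact Or.inl ha.symm
          · have hce : c = cp0 := by
              rcases hkpq with rfl | rfl
              · exact cfg.uniqueB hcB hcp0 hkc hpcp
              · exact cfg.uniqueB hcB hcp0 hkc hqcq
            rw [hce, hcp0e] at hor
            rcases hor with ⟨ha, hb⟩ | ⟨ha, hb⟩
            · exact Or.inr hb.symm
            · exact Or.inl ha.symm
      have hvreach : Relation.ReflTransGen (Adj cfg.A cfg.B) p cfg.v :=
        by haveI : Std.Symm (Adj cfg.A cfg.B) := ⟨fun _ _ h => adj_symm h⟩
           exact Relation.ReflTransGen.symmetric.symm _ _ (cfg.hconn p hpC)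
      rcases hclose cfg.v hvreach with h | h <;> omega
    have hqcp : q ≠ cp0.1 ∧ q ≠ cp0.2 := by
      constructor <;> intro h
      · exact hcpcq (cfg.uniqueB hcp0 hcq0 (Or.inl h) hqcq)
      · exact hcpcq (cfg.uniqueB hcp0 hcq0 (Or.inr h) hqcq)
    have hpcq : p ≠ cq0.1 ∧ p ≠ cq0.2 := by
      constructor <;> intro h
      · exact hcpcq (cfg.uniqueB hcp0 hcq0 hpcp (Or.inl h))
      · exact hcpcq (cfg.uniqueB hcp0 hcq0 hpcp (Or.inr h))
    have havoid : ∀ c ∈ cfg.B, c ≠ cp0 → c ≠ cq0 →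
        (c.1 < p ∨ q < c.1) ∧ (c.2 < p ∨ q < c.2) := by
      intro c hc h1 h2
      have e1 : c.1 ≠ p := fun h => h1 (cfg.uniqueB hc hcp0 (Or.inl h.symm) hpcp)
      have e2 : c.1 ≠ q := fun h => h2 (cfg.uniqueB hc hcq0 (Or.inl h.symm) hqcq)
      have e3 : c.2 ≠ p := fun h => h1 (cfg.uniqueB hc hcp0 (Or.inr h.symm) hpcp)
      have e4 : c.2 ≠ q := fun h => h2 (cfg.uniqueB hc hcq0 (Or.inr h.symm) hqcq)
      have n1 := hnoin c.1 (cfg.hBC c hc).1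
      have n2 := hnoin c.2 (cfg.hBC c hc).2
      constructor <;> omega
    have hcplt := cfg.hBlt cp0 hcp0
    have hcqlt := cfg.hBlt cq0 hcq0
    have hLpq : cfg.L p ≠ cfg.L q := cfg.hAalt (p, q) heA
    have hLcp : cfg.L cp0.1 ≠ cfg.L cp0.2 := cfg.hBalt cp0 hcp0
    have hLcq : cfg.L cq0.1 ≠ cfg.L cq0.2 := cfg.hBalt cq0 hcq0
    rcases hpcp with hp1 | hp2 <;> rcases hqcq with hq1 | hq2
    · -- case "right": cp0 = (p, Y1), cq0 = (q, Y2)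
      have hY1 : q < cp0.2 := by
        have h1 : cp0.2 ≠ q := Ne.symm hqcp.2
        have h2 := hnoin cp0.2 (cfg.hBC cp0 hcp0).2
        omega
      have hY2 : q < cq0.2 := by omega
      have hY21 : cq0.2 < cp0.2 :=
        cfg.hBnc cp0 hcp0 cq0 hcq0 (by omega) (by omega)
      refine cfg.step n hn IH p q heA hpq hev cp0 cq0 hcp0 hcq0 hcpcq
        cp0.2 cq0.2 ?_ ?_ (cfg.hBC cp0 hcp0).2 (cfg.hBC cq0 hcq0).2
        (by omega) (by omega) (by omega) (by omega)
        (cq0.2, cp0.2) (Or.inr ⟨rfl, rfl⟩) (by simpa using hY21) ?_ ?_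
      · right; rw [hp1]
      · right; rw [hq1]
      · -- noncrossing of the new cap
        intro c hc h1 h2
        obtain ⟨a1, a2⟩ := havoid c hc h1 h2
        simp only
        constructor
        · intro g1 g2
          exact cfg.hBnc cp0 hcp0 c hc (by omega) (by omega)
        · intro g1 g2
          rcases a1 with a1 | a1
          · exact cfg.hBnc c hc cp0 hcp0 (by omega) (by omega)
          · exfalso
            have := cfg.hBnc cq0 hcq0 c hc (by omega) (by omega)
            omega
      · -- the count
        simp only
        rw [← hp1, ← hq1]
        exact count_case2 (cfg.L p) (cfg.L q) (cfg.L cq0.2) hLpq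
          (by rw [← hq1] at hLcq; exact fun h => hLcq h.symm)
    · -- case "mixed impossible": cp0 = (p, Y), cq0 = (X', q)
      exfalso
      have hY1 : q < cp0.2 := by
        have h1 : cp0.2 ≠ q := Ne.symm hqcp.2
        have h2 := hnoin cp0.2 (cfg.hBC cp0 hcp0).2
        omega
      have hX' : cq0.1 < p := by
        have h1 : cq0.1 ≠ p := Ne.symm hpcq.1
        have h2 := hnoin cq0.1 (cfg.hBC cq0 hcq0).1
        omega
      have := cfg.hBnc cq0 hcq0 cp0 hcp0 (by omega) (by omega)
      omega
    · -- case "mixed": cp0 = (X, p), cq0 = (q, Y)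
      have hX : cp0.1 < p := by omega
      have hY : q < cq0.2 := by omega
      refine cfg.step n hn IH p q heA hpq hev cp0 cq0 hcp0 hcq0 hcpcq
        cp0.1 cq0.2 ?_ ?_ (cfg.hBC cp0 hcp0).1 (cfg.hBC cq0 hcq0).2
        (by omega) ?_ (by omega) (by omega)
        (cp0.1, cq0.2) (Or.inl ⟨rfl, rfl⟩) (by simp only; omega) ?_ ?_
      · left; rw [hp2]
      · right; rw [hq1]
      · -- op ≠ q
        have h2 := hnoin cp0.1 (cfg.hBC cp0 hcp0).1
        omega
      · intro c hc h1 h2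
        obtain ⟨a1, a2⟩ := havoid c hc h1 h2
        simp only
        constructor
        · intro g1 g2
          rcases a1 with a1 | a1
          · have := cfg.hBnc cp0 hcp0 c hc (by omega) (by omega)
            omega
          · exact cfg.hBnc cq0 hcq0 c hc (by omega) (by omega)
        · intro g1 g2
          rcases a2 with a2 | a2
          · exfalso
            have := cfg.hBnc c hc cp0 hcp0 (by omega) (by omega)
            omega
          · exact cfg.hBnc c hc cq0 hcq0 (by omega) (by omega)
      · simp only
        rw [← hq1]
        exact count_case1 (cfg.L p) (cfg.L q) (cfg.L cp0.1) hLpq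
    · -- case "left": cp0 = (X1, p), cq0 = (X2, q)
      have hX1 : cp0.1 < p := by omega
      have hX2 : cq0.1 < p := by
        have h1 : cq0.1 ≠ p := Ne.symm hpcq.1
        have h2 := hnoin cq0.1 (cfg.hBC cq0 hcq0).1
        omega
      have hX12 : cq0.1 ≠ cp0.1 := by
        intro h
        exact hcpcq (cfg.uniqueB hcp0 hcq0 (Or.inl h) (Or.inl rfl))
      have hX21 : cq0.1 < cp0.1 := by
        rcases lt_trichotomy cq0.1 cp0.1 with h | h | h
        · exact h
        · exact absurd h hX12
        · exfalso
          have := cfg.hBnc cp0 hcp0 cq0 hcq0 h (by omega)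
          omega
      refine cfg.step n hn IH p q heA hpq hev cp0 cq0 hcp0 hcq0 hcpcq
        cp0.1 cq0.1 ?_ ?_ (cfg.hBC cp0 hcp0).1 (cfg.hBC cq0 hcq0).1
        (by omega) (by omega) (by omega) (by omega)
        (cq0.1, cp0.1) (Or.inr ⟨rfl, rfl⟩) (by simpa using hX21) ?_ ?_
      · left; rw [hp2]
      · left; rw [hq2]
      · intro c hc h1 h2
        obtain ⟨a1, a2⟩ := havoid c hc h1 h2
        have e5 : c.2 ≠ cp0.1 := by
          intro h
          exact h1 (cfg.uniqueB hc hcp0 (Or.inr h.symm) (Or.inl rfl))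
        simp only
        constructor
        · intro g1 g2
          have hc2q : c.2 < cq0.2 := cfg.hBnc cq0 hcq0 c hc (by omega) (by omega)
          rcases lt_trichotomy c.2 cp0.1 with h | h | h
          · exact h
          · exact absurd h e5
          · exfalso
            have := cfg.hBnc c hc cp0 hcp0 (by omega) (by omega)
            omega
        · intro g1 g2
          have := cfg.hBnc c hc cq0 hcq0 (by omega) (by omega)
          omega
      · simp only
        rw [← hp2] at hLcp
        exact count_case3 (cfg.L p) (cfg.L cp0.1) (cfg.L cq0.1)
          (fun h => hLcp h.symm)


end Cfg
end Key

lemma wlab_iff (w : Weight) (i : ℤ) :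
    (fun i => decide (w.label i = some Label.up)) i = true ↔
      w.label i = some Label.up := by
  simp

lemma wlab_down (w : Weight) (i : ℤ) (h : w.label i = some Label.down) :
    (fun i => decide (w.label i = some Label.up)) i = false := by
  simp [h]

/-- In any oriented circle diagram, the degree of an anticlockwise circle
(its total number of clockwise cups and caps) is one less than the total number of caps
it contains, and the degree of a clockwise circle is one more than the total number of
caps it contains. -/
theorem statement_0 (a : ArcDiagram) (w : Weight) (b : ArcDiagram)
    (ha : OrientedCup a w) (hb : OrientedCap w b)
    (C : Set ℤ) (hC : IsCircle a b C)
    (v : ℤ) (hv : v ∈ C) (hleft : ∀ j ∈ C, v ≤ j) :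
    (w.label v = some Label.down →
      {p ∈ a.cups | p.1 ∈ C ∧ w.label p.1 = some Label.up}.ncard +
        {p ∈ b.cups | p.1 ∈ C ∧ w.label p.1 = some Label.up}.ncard + 1 =
        {p ∈ b.cups | p.1 ∈ C}.ncard) ∧
    (w.label v = some Label.up →
      {p ∈ a.cups | p.1 ∈ C ∧ w.label p.1 = some Label.up}.ncard +
        {p ∈ b.cups | p.1 ∈ C ∧ w.label p.1 = some Label.up}.ncard =
        {p ∈ b.cups | p.1 ∈ C}.ncard + 1) := by
  classical
  obtain ⟨⟨v0, hv0C, hchar⟩, hcov⟩ := hC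
  have hclosed : ∀ i ∈ C, ∀ j, arcAdj a b i j → j ∈ C := by
    intro i hi j hadj
    rw [hchar] at hi ⊢
    exact hi.tail hadj
  have hreachC : ∀ i ∈ C, ∀ j, reaches a b i j → j ∈ C := by
    intro i hi j hij
    rw [hchar] at hi ⊢
    exact hi.trans hij
  set A : Set (ℤ × ℤ) := {c ∈ a.cups | c.1 ∈ C} with hAdef
  set B : Set (ℤ × ℤ) := {c ∈ b.cups | c.1 ∈ C} with hBdef
  set L : ℤ → Bool := fun i => decide (w.label i = some Label.up) with hLdef
  have hA2C : ∀ c ∈ A, c.1 ∈ C ∧ c.2 ∈ C := by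
    rintro c ⟨hc, h1⟩
    refine ⟨h1, hclosed c.1 h1 c.2 ?_⟩
    exact Or.inl hc
  have hB2C : ∀ c ∈ B, c.1 ∈ C ∧ c.2 ∈ C := by
    rintro c ⟨hc, h1⟩
    refine ⟨h1, hclosed c.1 h1 c.2 ?_⟩
    exact Or.inr (Or.inr (Or.inl hc))
  have hCfin : C.Finite := by
    refine ((a.cups_finite.image Prod.fst).union (a.cups_finite.image Prod.snd)).subset ?_
    intro i hi
    obtain ⟨j, hj⟩ := (hcov i hi).1
    rcases hj with h | h
    · exact Or.inl ⟨(i, j), h, rfl⟩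
    · exact Or.inr ⟨(j, i), h, rfl⟩
  have hconv : ∀ i j : ℤ, i ∈ C → reaches a b i j →
      Relation.ReflTransGen (Key.Adj A B) i j := by
    intro i j hi hij
    induction hij with
    | refl => exact Relation.ReflTransGen.refl
    | @tail k l hik hkl ih =>
      have hkC : k ∈ C := hreachC i hi k hik
      have hlC : l ∈ C := hclosed k hkC l hkl
      refine ih.tail ?_
      rcases hkl with h | h | h | h
      · exact ⟨(k, l), Or.inl ⟨h, hkC⟩, Or.inl ⟨rfl, rfl⟩⟩
      · exact ⟨(l, k), Or.inl ⟨h, hlC⟩, Or.inr ⟨rfl, rfl⟩⟩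
      · exact ⟨(k, l), Or.inr ⟨h, hkC⟩, Or.inl ⟨rfl, rfl⟩⟩
      · exact ⟨(l, k), Or.inr ⟨h, hlC⟩, Or.inr ⟨rfl, rfl⟩⟩
  have hAaltp : ∀ c ∈ A, L c.1 ≠ L c.2 := by
    rintro c ⟨hc, _⟩
    rcases ha.2.2.1 c hc with ⟨h1, h2⟩ | ⟨h1, h2⟩ <;>
      simp [hLdef, h1, h2]
  have hBaltp : ∀ c ∈ B, L c.1 ≠ L c.2 := by
    rintro c ⟨hc, _⟩
    rcases hb.2.2.1 c hc with ⟨h1, h2⟩ | ⟨h1, h2⟩ <;>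
      simp [hLdef, h1, h2]
  let K : Key.Cfg :=
    { C := C, A := A, B := B, L := L, v := v
      hCfin := hCfin
      hvC := hv
      hvmin := hleft
      hAlt := fun c hc => a.cups_lt c hc.1
      hBlt := fun c hc => b.cups_lt c hc.1
      hAC := hA2C
      hBC := hB2C
      hAdisj := fun c hc d hd hne => a.cups_disjoint c hc.1 d hd.1 hne
      hBdisj := fun c hc d hd hne => b.cups_disjoint c hc.1 d hd.1 hne
      hAnc := fun c hc d hd => a.cups_noncrossing c hc.1 d hd.1
      hBnc := fun c hc d hd => b.cups_noncrossing c hc.1 d hd.1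
      hAcov := by
        intro i hi
        obtain ⟨j, hj⟩ := (hcov i hi).1
        rcases hj with h | h
        · exact ⟨(i, j), ⟨h, hi⟩, Or.inl rfl⟩
        · refine ⟨(j, i), ⟨h, hclosed i hi j (Or.inr (Or.inl h))⟩, Or.inr rfl⟩
      hBcov := by
        intro i hi
        obtain ⟨j, hj⟩ := (hcov i hi).2
        rcases hj with h | h
        · exact ⟨(i, j), ⟨h, hi⟩, Or.inl rfl⟩
        · refine ⟨(j, i), ⟨h, hclosed i hi j (Or.inr (Or.inr (Or.inr h)))⟩, Or.inr rfl⟩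
      hAalt := hAaltp
      hBalt := hBaltp
      hconn := by
        intro i hi
        have h1 := hconv v0 v hv0C ((hchar v).mp hv)
        have h2 := hconv v0 i hv0C ((hchar i).mp hi)
        haveI : Std.Symm (Key.Adj A B) := ⟨fun _ _ h => Key.adj_symm h⟩
        exact (Relation.ReflTransGen.symmetric.symm _ _ h1).trans h2 }
  have hconcl := Key.Cfg.concl K.A.ncard K rfl
  have hsetA : {p ∈ a.cups | p.1 ∈ C ∧ w.label p.1 = some Label.up}
      = {c ∈ K.A | K.L c.1 = true} := by
    ext c
    show (c ∈ a.cups ∧ c.1 ∈ C ∧ w.label c.1 = some Label.up) ↔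
      ((c ∈ a.cups ∧ c.1 ∈ C) ∧ L c.1 = true)
    rw [hLdef, wlab_iff]
    tauto
  have hsetB : {p ∈ b.cups | p.1 ∈ C ∧ w.label p.1 = some Label.up}
      = {c ∈ K.B | K.L c.1 = true} := by
    ext c
    show (c ∈ b.cups ∧ c.1 ∈ C ∧ w.label c.1 = some Label.up) ↔
      ((c ∈ b.cups ∧ c.1 ∈ C) ∧ L c.1 = true)
    rw [hLdef, wlab_iff]
    tauto
  have hsetB2 : {p ∈ b.cups | p.1 ∈ C} = K.B := rfl
  constructor
  · intro hdown
    have hLv : K.L K.v = false := wlab_down w v hdown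
    have := hconcl.1 hLv
    rw [hsetA, hsetB]
    exact this
  · intro hup
    have hLv : K.L K.v = true := (wlab_iff w v).mpr hup
    have := hconcl.2 hLv
    rw [hsetA, hsetB]
    exact this
end BrundanStroppel
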